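/- Let p be a prime and m ≥ 2 an integer. Then (p² − 1)·Θ_m > p^{2m−2} − 1; that is, Θ_m is strictly greater than (p^{2m−2} − 1)/(p² − 1), the number of points of ℙ^{m−2}(𝔽_{p²}). -/

import Mathlib

open Projectivization

/-- The number of points of the Hermitian hypersurface
`x₁^(p+1) + ⋯ + x_m^(p+1) = 0` in `ℙ^(m-1)(𝔽_{p²})`. -/
noncomputable def hermTheta (p : ℕ) [Fact p.Prime] (m : ℕ) : ℕ :=
  Nat.card {x : Projectivization (GaloisField p 2) (Fin m → GaloisField p 2) //
    ∑ i, (x.rep i) ^ (p + 1) = 0}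

section Aux

noncomputable instance (q : ℕ) [Fact q.Prime] : Fintype (GaloisField q 2) := Fintype.ofFinite _

variable {p : ℕ} [Fact p.Prime]

local notation "F" => GaloisField p 2

lemma hermAux.hcardF : Nat.card (GaloisField p 2) = p ^ 2 := GaloisField.card p 2 (by norm_num)

lemma hermAux.hp2 : 2 ≤ p := (Fact.out : p.Prime).two_le

lemma hermAux.pow_card_fix (x : F) : x ^ (p ^ 2) = x := by
  have := FiniteField.pow_card x (K := F)
  rwa [← Nat.card_eq_fintype_card, hermAux.hcardF] at this

lemma hermAux.card_unitsF : Nat.card ((GaloisField p 2)ˣ) = p ^ 2 - 1 := by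
  classical
  rw [Nat.card_eq_fintype_card, Fintype.card_units, ← Nat.card_eq_fintype_card, hermAux.hcardF]

lemma hermAux.order_gen (g : Fˣ) (hg : ∀ x : Fˣ, x ∈ Subgroup.zpowers g) :
    orderOf g = p ^ 2 - 1 := by
  rw [orderOf_eq_card_of_forall_mem_zpowers hg]; exact hermAux.card_unitsF

/-- Surjectivity of the norm map onto the prime field. -/
lemma hermAux.exists_norm_root (a : F) (ha : a ^ p = a) : ∃ x : F, x ^ (p + 1) = a := by
  rcases eq_or_ne a 0 with rfl | h0
  · exact ⟨0, zero_pow (by omega)⟩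
  obtain ⟨g, hg⟩ := IsCyclic.exists_generator (α := Fˣ)
  have horder := hermAux.order_gen g hg
  set u : Fˣ := Units.mk0 a h0 with hu
  obtain ⟨k, hk⟩ := Subgroup.mem_zpowers_iff.mp (hg u)
  have hu1 : u ^ (p - 1) = 1 := by
    have hp := hermAux.hp2 (p := p)
    have h2 : a ^ (p - 1) * a = a := by
      rw [← pow_succ, show p - 1 + 1 = p by omega, ha]
    have h3 : a ^ (p - 1) = 1 := mul_right_cancel₀ h0 (h2.trans (one_mul a).symm)
    exact Units.ext (by rw [Units.val_pow_eq_pow_val, Units.val_one, hu, Units.val_mk0, h3])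
  have hdvd : ((p ^ 2 - 1 : ℕ) : ℤ) ∣ k * ((p - 1 : ℕ) : ℤ) := by
    rw [← horder, orderOf_dvd_iff_zpow_eq_one, zpow_mul, hk, zpow_natCast, hu1]
  have hp := hermAux.hp2 (p := p)
  have hcast1 : ((p ^ 2 - 1 : ℕ) : ℤ) = ((p : ℤ) + 1) * ((p : ℤ) - 1) := by
    rw [Nat.cast_sub (by nlinarith)]
    push_cast; ring
  have hcast2 : ((p - 1 : ℕ) : ℤ) = (p : ℤ) - 1 := by
    rw [Nat.cast_sub (by omega)]; simp
  rw [hcast1, hcast2] at hdvd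
  have hne : ((p : ℤ) - 1) ≠ 0 := by
    have : (2 : ℤ) ≤ (p : ℤ) := by exact_mod_cast hp
    omega
  obtain ⟨t, ht⟩ := (mul_dvd_mul_iff_right hne).mp hdvd
  refine ⟨((g ^ t : Fˣ) : F), ?_⟩
  have hpow : (g ^ t) ^ (p + 1) = u := by
    rw [← zpow_natCast (g ^ t), ← zpow_mul, ← hk]
    congr 1
    push_cast [ht]
    ring
  calc ((g ^ t : Fˣ) : F) ^ (p + 1) = (((g ^ t) ^ (p + 1) : Fˣ) : F) := by
        rw [Units.val_pow_eq_pow_val]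
      _ = a := by rw [hpow, hu, Units.val_mk0]

lemma hermAux.herm_pow_fix {n : ℕ} (v : Fin n → F) :
    (∑ i, v i ^ (p + 1)) ^ p = ∑ i, v i ^ (p + 1) := by
  calc (∑ i, v i ^ (p + 1)) ^ p = frobenius F p (∑ i, v i ^ (p + 1)) := (frobenius_def p _).symm
    _ = ∑ i, frobenius F p (v i ^ (p + 1)) := map_sum _ _ _
    _ = ∑ i, v i ^ (p + 1) := by
        refine Finset.sum_congr rfl fun i _ => ?_
        rw [frobenius_def, ← pow_mul, show (p + 1) * p = p ^ 2 + p by ring, pow_add,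
          hermAux.pow_card_fix, pow_succ]
        ring

lemma hermAux.exists_two_roots : ∃ a b : F, a ≠ b ∧ a ^ (p + 1) = -1 ∧ b ^ (p + 1) = -1 := by
  have hp : 2 ≤ p := hermAux.hp2
  obtain ⟨a, hA⟩ := hermAux.exists_norm_root (-1 : F) (neg_one_pow_char F p)
  have ha0 : a ≠ 0 := by
    intro h; rw [h, zero_pow (by omega)] at hA
    exact one_ne_zero (neg_eq_zero.mp hA.symm)
  obtain ⟨g, hg⟩ := IsCyclic.exists_generator (α := Fˣ)
  have horder := hermAux.order_gen g hg
  set z : Fˣ := g ^ (p - 1) with hz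
  have hz1 : z ^ (p + 1) = 1 := by
    have e1 : (p - 1) * (p + 1) = p ^ 2 - 1 := by
      zify [show 1 ≤ p by omega, show 1 ≤ p ^ 2 by nlinarith]
      ring
    rw [hz, ← pow_mul, e1, ← horder, pow_orderOf_eq_one]
  have hzne : z ≠ 1 := by
    intro h
    have hd := orderOf_dvd_of_pow_eq_one (hz ▸ h)
    rw [horder] at hd
    have hle := Nat.le_of_dvd (by omega) hd
    have hps : p < p ^ 2 := by nlinarith
    omega
  refine ⟨a, (z : F) * a, ?_, hA, ?_⟩
  · intro h
    apply hzne
    have h0 : ((z : F) - 1) * a = 0 := by rw [sub_mul, one_mul, ← h]; ring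
    rcases mul_eq_zero.mp h0 with h' | h'
    · exact Units.ext (by push_cast; linear_combination h')
    · exact absurd h' ha0
  · rw [mul_pow, hA]
    have hzz : ((z : F)) ^ (p + 1) = 1 := by
      rw [← Units.val_pow_eq_pow_val, hz1, Units.val_one]
    rw [hzz, one_mul]

lemma hermAux.smul_sum_pow {m : ℕ} (c : F) (v : Fin m → F) :
    ∑ i, (c • v) i ^ (p + 1) = c ^ (p + 1) * ∑ i, v i ^ (p + 1) := by
  simp [Pi.smul_apply, smul_eq_mul, mul_pow, Finset.mul_sum]

lemma hermAux.cond_inv {m : ℕ} (c : Fˣ) (v : Fin m → F) :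
    (∑ i, ((c : F) • v) i ^ (p + 1) = 0) ↔ (∑ i, v i ^ (p + 1) = 0) := by
  rw [hermAux.smul_sum_pow, mul_eq_zero]
  simp [pow_eq_zero_iff, c.ne_zero]

noncomputable def hermAux.countEquiv (m : ℕ) :
    Fˣ × {x : Projectivization F (Fin m → F) // ∑ i, (x.rep i) ^ (p + 1) = 0} ≃
      {v : Fin m → F // v ≠ 0 ∧ ∑ i, v i ^ (p + 1) = 0} := by
  apply Equiv.ofBijective (fun cx =>
    ⟨(cx.1 : F) • cx.2.1.rep,
      smul_ne_zero cx.1.ne_zero cx.2.1.rep_nonzero,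
      (hermAux.cond_inv cx.1 _).mpr cx.2.2⟩)
  constructor
  · rintro ⟨c, x, hx⟩ ⟨d, y, hy⟩ h
    simp only [Subtype.mk.injEq] at h
    have hxy : x = y := by
      have h1 : mk F ((c : F) • x.rep) (smul_ne_zero c.ne_zero x.rep_nonzero) = x := by
        conv_rhs => rw [← x.mk_rep]
        rw [mk_eq_mk_iff]
        exact ⟨c, rfl⟩
      have h2 : mk F ((d : F) • y.rep) (smul_ne_zero d.ne_zero y.rep_nonzero) = y := by
        conv_rhs => rw [← y.mk_rep]
        rw [mk_eq_mk_iff]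
        exact ⟨d, rfl⟩
      rw [← h1, ← h2]
      congr 1
    subst hxy
    have hcd : c = d := by
      have h3 : ((c : F) - (d : F)) • x.rep = 0 := by
        rw [sub_smul, h, sub_self]
      rcases smul_eq_zero.mp h3 with h' | h'
      · exact Units.ext (by linear_combination h')
      · exact absurd h' x.rep_nonzero
    simp [hcd]
  · rintro ⟨v, hv, hcond⟩
    obtain ⟨c, hc⟩ := exists_smul_eq_mk_rep F v hv
    have hrep : ∑ i, ((mk F v hv).rep i) ^ (p + 1) = 0 := by
      rw [← hc, Units.smul_def, hermAux.cond_inv]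
      exact hcond
    refine ⟨⟨c⁻¹, ⟨mk F v hv, hrep⟩⟩, ?_⟩
    ext
    simp only
    rw [← hc, Units.smul_def, smul_smul]
    norm_num

lemma hermAux.affine_lower (n : ℕ) :
    (p ^ 2) ^ (n + 1) ≤
      Nat.card {v : Fin (n + 2) → F // v ≠ 0 ∧ ∑ i, v i ^ (p + 1) = 0} := by
  classical
  obtain ⟨a, b, hab, ha, hb⟩ := hermAux.exists_two_roots (p := p)
  set e : Fin (n + 1) → F := Pi.single 0 1 with he
  have hse : ∑ i, e i ^ (p + 1) = 1 := by
    rw [he, Finset.sum_eq_single 0]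
    · simp
    · intro i _ hi; simp [Pi.single_apply, hi, zero_pow (Nat.succ_ne_zero p)]
    · simp
  have hex : ∀ w : Fin (n + 1) → F, ∃ x : F, x ^ (p + 1) = -∑ i, w i ^ (p + 1) := by
    intro w
    apply hermAux.exists_norm_root
    rw [neg_pow, hermAux.herm_pow_fix, neg_one_pow_char F p]
    ring
  set c : (Fin (n + 1) → F) → F := fun w => if w = e then a else Classical.choose (hex w)
    with hc
  have hce : c e = a := by simp only [hc, if_pos rfl]
  have hcprop : ∀ w, (c w) ^ (p + 1) = -∑ i, w i ^ (p + 1) := by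
    intro w
    by_cases h : w = e
    · subst h; rw [hce, ha, hse]
    · simp only [hc, if_neg h]
      exact Classical.choose_spec (hex w)
  set T := {v : Fin (n + 2) → F // v ≠ 0 ∧ ∑ i, v i ^ (p + 1) = 0} with hT
  have hsol : ∀ w : Fin (n + 1) → F, w ≠ 0 → ∀ x : F, x ^ (p + 1) = -∑ i, w i ^ (p + 1) →
      (Fin.cons x w ≠ (0 : Fin (n + 2) → F) ∧
        ∑ i, (Fin.cons x w : Fin (n+2) → F) i ^ (p + 1) = 0) := by
    intro w hw x hx
    constructor
    · intro h
      exact hw (funext fun i => by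
        have := congrFun h i.succ
        rwa [Fin.cons_succ] at this)
    · rw [Fin.sum_univ_succ]
      simp only [Fin.cons_zero, Fin.cons_succ]
      rw [hx]; ring
  have hene : e ≠ 0 := by
    intro h
    have := congrFun h 0
    simp [he] at this
  have hbsol := hsol e hene b (by rw [hb, hse])
  set Ψ : Option (Fin (n + 1) → F) → Option T := fun o =>
    match o with
    | none => some ⟨Fin.cons b e, hbsol⟩
    | some w => if hw : w = 0 then none else some ⟨Fin.cons (c w) w, hsol w hw _ (hcprop w)⟩
    with hΨ
  have hinj : Function.Injective Ψ := by
    rintro (_ | w) (_ | w') h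
    · rfl
    · simp only [hΨ] at h
      split_ifs at h with hw'
      have h2 := (Option.some.injEq _ _).mp h
      have htail := congrArg Fin.tail (congrArg Subtype.val h2)
      rw [Fin.tail_cons, Fin.tail_cons] at htail
      have hhead := congrArg (fun f => f 0) (congrArg Subtype.val h2)
      simp only [Fin.cons_zero] at hhead
      subst htail
      rw [hce] at hhead
      exact absurd hhead.symm hab
    · simp only [hΨ] at h
      split_ifs at h with hw
      have h2 := (Option.some.injEq _ _).mp h
      have htail := congrArg Fin.tail (congrArg Subtype.val h2)
      rw [Fin.tail_cons, Fin.tail_cons] at htail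
      have hhead := congrArg (fun f => f 0) (congrArg Subtype.val h2)
      simp only [Fin.cons_zero] at hhead
      subst htail
      rw [hce] at hhead
      exact absurd hhead hab
    · simp only [hΨ] at h
      split_ifs at h with hw hw'
      · subst hw; rw [hw']
      · have h2 := (Option.some.injEq _ _).mp h
        have htail := congrArg Fin.tail (congrArg Subtype.val h2)
        rw [Fin.tail_cons, Fin.tail_cons] at htail
        rw [htail]
  have hcard := Nat.card_le_card_of_injective Ψ hinj
  rw [Finite.card_option, Finite.card_option] at hcard
  have hfun : Nat.card (Fin (n + 1) → F) = (p ^ 2) ^ (n + 1) := by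
    rw [Nat.card_fun, hermAux.hcardF, Nat.card_eq_fintype_card, Fintype.card_fin]
  rw [hfun] at hcard
  exact le_of_add_le_add_right hcard

end Aux

theorem hermTheta_gt_proj_card (p : ℕ) [Fact p.Prime] (m : ℕ) (hm : 2 ≤ m) :
    ((p : ℤ) ^ 2 - 1) * (hermTheta p m : ℤ) > (p : ℤ) ^ (2 * m - 2) - 1 := by
  obtain ⟨n, rfl⟩ : ∃ n, m = n + 2 := ⟨m - 2, by omega⟩
  have hp : 2 ≤ p := (Fact.out : p.Prime).two_le
  have h1le : 1 ≤ p ^ 2 := by nlinarith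
  have hkey : (p ^ 2 - 1) * hermTheta p (n + 2) =
      Nat.card {v : Fin (n + 2) → GaloisField p 2 //
        v ≠ 0 ∧ ∑ i, v i ^ (p + 1) = 0} := by
    rw [← Nat.card_congr (hermAux.countEquiv (p := p) (n + 2)), Nat.card_prod,
      hermAux.card_unitsF, hermTheta]
  have hlow := hermAux.affine_lower (p := p) n
  rw [← hkey] at hlow
  have hZ := (Nat.cast_le (α := ℤ)).mpr hlow
  rw [Nat.cast_mul, Nat.cast_sub h1le] at hZ
  push_cast at hZ
  have hexp : 2 * (n + 2) - 2 = 2 * (n + 1) := by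
    clear hZ hlow hkey
    omega
  rw [hexp, pow_mul]
  have hpos : (1 : ℤ) ≤ ((p : ℤ) ^ 2) ^ (n + 1) := by
    apply one_le_pow₀
    nlinarith [show (2:ℤ) ≤ (p:ℤ) from by exact_mod_cast hp]
  linarith
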